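/- arXiv:2508.17301 — 3 statements merged into one kernel-verified Lean document; each statement's English description precedes it below -/
import Mathlib

section
/- Let η ∈ (0, 2 − 2δλ₁) and define ι(η) := (I − δG)⁻¹ (I − (2δ/(2−η))·G)⁻¹ (a − c). Then ι(η) has strictly positive entries, and the regulated equilibrium price p* equals 𝕡(η) if and only if 𝕡(η) ∈ K and ⟨ι(η), p⟩ ≤ ⟨ι(η), 𝕡(η)⟩ for every p ∈ K (i.e., K is contained in the half-space below the supporting hyperplane with normal ι(η) through 𝕡(η)). -/
open Matrix

noncomputable def Hmat {n : ℕ} (G : Matrix (Fin n) (Fin n) ℝ) (δ : ℝ) :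
    Matrix (Fin n) (Fin n) ℝ :=
  (1 - δ • G)⁻¹

/-- Monopolist profit Π(p) = (p − c)ᵀ H (a − p). -/
noncomputable def profit {n : ℕ} (G : Matrix (Fin n) (Fin n) ℝ) (δ : ℝ)
    (a c p : Fin n → ℝ) : ℝ :=
  (p - c) ⬝ᵥ (Hmat G δ *ᵥ (a - p))

/-- Aggregate consumer surplus V(p) = (1/2)(a − p)ᵀ H² (a − p). -/
noncomputable def surplus {n : ℕ} (G : Matrix (Fin n) (Fin n) ℝ) (δ : ℝ)
    (a p : Fin n → ℝ) : ℝ :=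
  (1 / 2 : ℝ) * ((a - p) ⬝ᵥ ((Hmat G δ * Hmat G δ) *ᵥ (a - p)))

/-- Unrestricted optimal price p^ur = (a + c)/2. -/
noncomputable def pUR {n : ℕ} (a c : Fin n → ℝ) : Fin n → ℝ :=
  (1 / 2 : ℝ) • (a + c)

/-- The Pareto price family 𝕡(η). -/
noncomputable def pFam {n : ℕ} (G : Matrix (Fin n) (Fin n) ℝ) (δ : ℝ)
    (a c : Fin n → ℝ) (η : ℝ) : Fin n → ℝ :=
  pUR a c - (η / (2 - η)) • ((1 - (2 * δ / (2 - η)) • G)⁻¹ *ᵥ ((1 / 2 : ℝ) • (a - c)))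

/-- The weight vector ι(η) = (I − δG)⁻¹ (I − (2δ/(2−η))G)⁻¹ (a − c). -/
noncomputable def iotaVec {n : ℕ} (G : Matrix (Fin n) (Fin n) ℝ) (δ : ℝ)
    (a c : Fin n → ℝ) (η : ℝ) : Fin n → ℝ :=
  Hmat G δ *ᵥ ((1 - (2 * δ / (2 - η)) • G)⁻¹ *ᵥ (a - c))

section aux
variable {n : ℕ}

lemma real_isHermitian_of_isSymm {G : Matrix (Fin n) (Fin n) ℝ} (h : G.IsSymm) :
    G.IsHermitian := by
  rw [IsHermitian, conjTranspose_eq_transpose_of_trivial]; exact h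

lemma real_dotProduct_self_pos {x : Fin n → ℝ} (hx : x ≠ 0) : 0 < x ⬝ᵥ x := by
  simp only [dotProduct]
  apply Finset.sum_pos'
  · intro i _; exact mul_self_nonneg _
  · obtain ⟨i, hi⟩ := Function.ne_iff.mp hx
    exact ⟨i, Finset.mem_univ i, mul_self_pos.mpr hi⟩

lemma dot_spectral (G : Matrix (Fin n) (Fin n) ℝ) (hG : G.IsHermitian)
    (lam1 : ℝ) (hmax : ∀ μ ∈ spectrum ℝ G, μ ≤ lam1) (x : Fin n → ℝ) :
    x ⬝ᵥ (G *ᵥ x) ≤ lam1 * (x ⬝ᵥ x) := by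
  classical
  set U : Matrix (Fin n) (Fin n) ℝ := (hG.eigenvectorUnitary : Matrix (Fin n) (Fin n) ℝ) with hUdef
  have hUT : star U = Uᵀ := by
    rw [star_eq_conjTranspose, conjTranspose_eq_transpose_of_trivial]
  have hU1 : U * Uᵀ = 1 := by
    rw [← hUT]; exact (Matrix.mem_unitaryGroup_iff).mp hG.eigenvectorUnitary.2
  set y : Fin n → ℝ := Uᵀ *ᵥ x with hydef
  have hxy : ∀ z, x ⬝ᵥ (U *ᵥ z) = y ⬝ᵥ z := by
    intro z
    rw [dotProduct_mulVec, ← mulVec_transpose]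
  have hGx : G *ᵥ x = U *ᵥ (diagonal hG.eigenvalues *ᵥ y) := by
    conv_lhs => rw [hG.spectral_theorem]
    rw [Unitary.conjStarAlgAut_apply, hUT, ← hUdef]
    simp only [← mulVec_mulVec, hydef]
    norm_num
  have hyy : x ⬝ᵥ x = y ⬝ᵥ y := by
    have : y ⬝ᵥ y = x ⬝ᵥ x := by
      calc y ⬝ᵥ y = y ⬝ᵥ (Uᵀ *ᵥ x) := rfl
        _ = (y ᵥ* Uᵀ) ⬝ᵥ x := dotProduct_mulVec _ _ _
        _ = (U *ᵥ y) ⬝ᵥ x := by rw [← mulVec_transpose, transpose_transpose]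
        _ = x ⬝ᵥ (U *ᵥ y) := dotProduct_comm _ _
        _ = x ⬝ᵥ ((U * Uᵀ) *ᵥ x) := by rw [← mulVec_mulVec]
        _ = x ⬝ᵥ x := by rw [hU1, one_mulVec]
    exact this.symm
  rw [hGx, hxy, hyy]
  have hdiag : y ⬝ᵥ (diagonal hG.eigenvalues *ᵥ y) = ∑ i, hG.eigenvalues i * (y i)^2 := by
    simp only [dotProduct, mulVec_diagonal]
    apply Finset.sum_congr rfl; intros; ring
  have hdiag2 : lam1 * (y ⬝ᵥ y) = ∑ i, lam1 * (y i)^2 := by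
    simp only [dotProduct, Finset.mul_sum]
    apply Finset.sum_congr rfl; intros; ring
  rw [hdiag, hdiag2]
  apply Finset.sum_le_sum
  intro i _
  have hei : hG.eigenvalues i ≤ lam1 := hmax _ (hG.eigenvalues_mem_spectrum_real i)
  nlinarith [sq_nonneg (y i)]

lemma posDef_one_sub_smul (G : Matrix (Fin n) (Fin n) ℝ) (hG : G.IsHermitian)
    (lam1 s : ℝ) (hmax : ∀ μ ∈ spectrum ℝ G, μ ≤ lam1) (hs : 0 ≤ s) (hsl : s * lam1 < 1) :
    (1 - s • G).PosDef := by
  refine Matrix.PosDef.of_dotProduct_mulVec_pos ?_ ?_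
  · rw [IsHermitian, conjTranspose_sub, conjTranspose_smul, conjTranspose_one, hG]
    simp
  · intro x hx
    have hxx : 0 < x ⬝ᵥ x := real_dotProduct_self_pos hx
    have h1 : (1 - s • G) *ᵥ x = x - s • (G *ᵥ x) := by
      rw [sub_mulVec, one_mulVec, smul_mulVec]
    have h2 : star x = x := by simp
    rw [h2, h1, dotProduct_sub, dotProduct_smul]
    have h3 : s * (x ⬝ᵥ (G *ᵥ x)) ≤ s * (lam1 * (x ⬝ᵥ x)) := by
      rcases eq_or_lt_of_le hs with h | h
      · simp [← h]
      · exact (mul_le_mul_iff_right₀ h).mpr (dot_spectral G hG lam1 hmax x)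
    have h4 : s * (lam1 * (x ⬝ᵥ x)) < x ⬝ᵥ x := by nlinarith
    simp only [smul_eq_mul]
    linarith

end aux

section aux2
variable {n : ℕ}

lemma lam1_nonneg (hn : 1 ≤ n) (G : Matrix (Fin n) (Fin n) ℝ) (hG : G.IsHermitian)
    (hGdiag : ∀ i, G i i = 0)
    (lam1 : ℝ) (hmax : ∀ μ ∈ spectrum ℝ G, μ ≤ lam1) : 0 ≤ lam1 := by
  classical
  have htr : G.trace = ∑ i, hG.eigenvalues i := by
    conv_lhs => rw [hG.spectral_theorem]
    rw [Unitary.conjStarAlgAut_apply, trace_mul_cycle]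
    have h1 : star (hG.eigenvectorUnitary : Matrix (Fin n) (Fin n) ℝ) *
        (hG.eigenvectorUnitary : Matrix (Fin n) (Fin n) ℝ) = 1 :=
      (Matrix.mem_unitaryGroup_iff').mp hG.eigenvectorUnitary.2
    rw [h1, Matrix.one_mul, trace_diagonal]
    simp
  have htr0 : G.trace = 0 := by
    simp [Matrix.trace, Matrix.diag, hGdiag]
  have hsum : ∑ i, hG.eigenvalues i = 0 := by rw [← htr, htr0]
  by_contra h
  push_neg at h
  have hall : ∀ i : Fin n, hG.eigenvalues i ≤ lam1 := fun i =>
    hmax _ (hG.eigenvalues_mem_spectrum_real i)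
  have : (0:ℝ) < 0 := by
    calc (0:ℝ) = ∑ i, hG.eigenvalues i := hsum.symm
      _ ≤ ∑ _i : Fin n, lam1 := Finset.sum_le_sum (fun i _ => hall i)
      _ = n * lam1 := by simp [Finset.sum_const, mul_comm]
      _ < 0 := by
          have : (0:ℝ) < n := by exact_mod_cast hn
          nlinarith
  exact absurd this (lt_irrefl 0)

/-- positivity of `(1 - s•G)⁻¹ *ᵥ x` for positive `x`. -/
lemma inv_mulVec_pos (G : Matrix (Fin n) (Fin n) ℝ)
    (hGnn : ∀ i j, 0 ≤ G i j) (s : ℝ) (hs : 0 ≤ s)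
    (hpd : (1 - s • G).PosDef) (x : Fin n → ℝ) (hx : ∀ i, 0 < x i) :
    ∀ i, 0 < ((1 - s • G)⁻¹ *ᵥ x) i := by
  classical
  set A : Matrix (Fin n) (Fin n) ℝ := 1 - s • G with hAdef
  have hAT : Aᵀ = A := by
    have := hpd.isHermitian
    rwa [IsHermitian, conjTranspose_eq_transpose_of_trivial] at this
  set y : Fin n → ℝ := A⁻¹ *ᵥ x with hydef
  have hAy : A *ᵥ y = x := by
    rw [hydef, mulVec_mulVec, Matrix.mul_nonsing_inv _ (isUnit_iff_isUnit_det _ |>.mp hpd.isUnit),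
      one_mulVec]
  set w : Fin n → ℝ := fun i => |y i| with hwdef
  have hmulA : ∀ z : Fin n → ℝ, A *ᵥ z = z - s • (G *ᵥ z) := by
    intro z; rw [hAdef, sub_mulVec, one_mulVec, smul_mulVec]
  -- symmetry transfer
  have hsymdot : ∀ u v : Fin n → ℝ, u ⬝ᵥ (A *ᵥ v) = v ⬝ᵥ (A *ᵥ u) := by
    intro u v
    rw [dotProduct_mulVec, ← mulVec_transpose, hAT, dotProduct_comm]
  -- key inequality pieces
  have hww : w ⬝ᵥ w = y ⬝ᵥ y := by
    simp only [dotProduct, hwdef, abs_mul_abs_self]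
  have hGww : y ⬝ᵥ (G *ᵥ y) ≤ w ⬝ᵥ (G *ᵥ w) := by
    simp only [dotProduct, mulVec, hwdef]
    apply Finset.sum_le_sum
    intro i _
    rw [Finset.mul_sum, Finset.mul_sum]
    apply Finset.sum_le_sum
    intro j _
    calc y i * (G i j * y j) = G i j * (y i * y j) := by ring
      _ ≤ G i j * (|y i| * |y j|) := by
          apply mul_le_mul_of_nonneg_left _ (hGnn i j)
          calc y i * y j ≤ |y i * y j| := le_abs_self _
            _ = |y i| * |y j| := abs_mul _ _
      _ = |y i| * (G i j * |y j|) := by ring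
  have hwAw : w ⬝ᵥ (A *ᵥ w) ≤ y ⬝ᵥ (A *ᵥ y) := by
    rw [hmulA w, hmulA y, dotProduct_sub, dotProduct_sub, dotProduct_smul, dotProduct_smul,
      hww]
    have : s * (y ⬝ᵥ (G *ᵥ y)) ≤ s * (w ⬝ᵥ (G *ᵥ w)) := mul_le_mul_of_nonneg_left hGww hs
    simp only [smul_eq_mul]
    linarith
  have hxv : x ⬝ᵥ y ≤ x ⬝ᵥ w := by
    simp only [dotProduct]
    apply Finset.sum_le_sum
    intro i _
    exact mul_le_mul_of_nonneg_left (le_abs_self _) (hx i).le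
  -- the vector v := w - y satisfies v ⬝ Av ≤ 0
  have hkey : (w - y) ⬝ᵥ (A *ᵥ (w - y)) ≤ 0 := by
    have hexp : (w - y) ⬝ᵥ (A *ᵥ (w - y))
        = w ⬝ᵥ (A *ᵥ w) - y ⬝ᵥ (A *ᵥ y) - 2 * (x ⬝ᵥ w - x ⬝ᵥ y) := by
      rw [mulVec_sub, dotProduct_sub, sub_dotProduct, sub_dotProduct]
      have h1 : w ⬝ᵥ (A *ᵥ y) = x ⬝ᵥ w := by rw [hAy, dotProduct_comm]
      have h2 : y ⬝ᵥ (A *ᵥ w) = x ⬝ᵥ w := by rw [hsymdot, hAy, dotProduct_comm]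
      have h3 : y ⬝ᵥ (A *ᵥ y) = x ⬝ᵥ y := by rw [hAy, dotProduct_comm]
      rw [h1, h2]
      linarith [h3]
    rw [hexp]
    linarith
  have hveq : w - y = 0 := by
    by_contra hne
    have := hpd.dotProduct_mulVec_pos hne
    rw [show star (w - y) = w - y by simp] at this
    linarith
  have hy0 : ∀ i, 0 ≤ y i := by
    intro i
    have : w i = y i := by
      have := congrFun hveq i
      simpa [sub_eq_zero] using this
    rw [← this, hwdef]
    exact abs_nonneg _
  intro i
  have hcomp : y i - s * ((G *ᵥ y) i) = x i := by
    have := congrFun hAy i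
    rw [hmulA y] at this
    simpa using this
  have hGy : 0 ≤ (G *ᵥ y) i := by
    simp only [mulVec, dotProduct]
    apply Finset.sum_nonneg
    intro j _
    exact mul_nonneg (hGnn i j) (hy0 j)
  have : x i ≤ y i := by nlinarith [mul_nonneg hs hGy]
  exact lt_of_lt_of_le (hx i) this
end aux2

section aux3
variable {n : ℕ}

lemma profit_expand (G : Matrix (Fin n) (Fin n) ℝ) (δ : ℝ)
    (hHT : (Hmat G δ)ᵀ = Hmat G δ) (a c p q : Fin n → ℝ) :
    profit G δ a c q = profit G δ a c p
      + (q - p) ⬝ᵥ (Hmat G δ *ᵥ (a + c - (2:ℝ) • p))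
      - (q - p) ⬝ᵥ (Hmat G δ *ᵥ (q - p)) := by
  have hsym : ∀ u v : Fin n → ℝ, u ⬝ᵥ (Hmat G δ *ᵥ v) = v ⬝ᵥ (Hmat G δ *ᵥ u) := by
    intro u v
    rw [dotProduct_mulVec, ← mulVec_transpose, hHT, dotProduct_comm]
  have hv : a + c - (2:ℝ) • p = (a - p) - (p - c) := by
    funext i
    simp only [Pi.add_apply, Pi.sub_apply, Pi.smul_apply, smul_eq_mul]
    ring
  have h1 : q - c = (p - c) + (q - p) := by abel
  have h2 : a - q = (a - p) - (q - p) := by abel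
  unfold profit
  have e2 : (q - c) ⬝ᵥ (Hmat G δ *ᵥ (a - q))
      = (p-c) ⬝ᵥ (Hmat G δ *ᵥ (a-p)) - (p-c) ⬝ᵥ (Hmat G δ *ᵥ (q-p))
        + ((q-p) ⬝ᵥ (Hmat G δ *ᵥ (a-p)) - (q-p) ⬝ᵥ (Hmat G δ *ᵥ (q-p))) := by
    rw [h1, h2, mulVec_sub, add_dotProduct, dotProduct_sub, dotProduct_sub]
  have e4 : (q-p) ⬝ᵥ (Hmat G δ *ᵥ (a + c - (2:ℝ) • p))
      = (q-p) ⬝ᵥ (Hmat G δ *ᵥ (a-p)) - (q-p) ⬝ᵥ (Hmat G δ *ᵥ (p-c)) := by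
    rw [hv, mulVec_sub, dotProduct_sub]
  have e3 := hsym (p-c) (q-p)
  linarith [e2, e3, e4]

lemma foc (G : Matrix (Fin n) (Fin n) ℝ) (δ : ℝ) (a c : Fin n → ℝ)
    (hpd : (Hmat G δ).PosDef) (hHT : (Hmat G δ)ᵀ = Hmat G δ)
    (K : Set (Fin n → ℝ)) (hKconv : Convex ℝ K)
    (q : Fin n → ℝ) (hq : q ∈ K)
    (hmax : ∀ r ∈ K, profit G δ a c r ≤ profit G δ a c q)
    (p : Fin n → ℝ) (hp : p ∈ K) :
    (p - q) ⬝ᵥ (Hmat G δ *ᵥ (a + c - (2:ℝ) • q)) ≤ 0 := by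
  by_contra hcon
  push_neg at hcon
  set v : Fin n → ℝ := p - q with hvdef
  set g : ℝ := v ⬝ᵥ (Hmat G δ *ᵥ (a + c - (2:ℝ) • q)) with hgdef
  have hvne : v ≠ 0 := by
    intro h
    rw [h] at hgdef
    simp [zero_dotProduct] at hgdef
    rw [hgdef] at hcon
    exact lt_irrefl 0 hcon
  have hQ : 0 < v ⬝ᵥ (Hmat G δ *ᵥ v) := by
    have := hpd.dotProduct_mulVec_pos hvne
    simpa using this
  set Q : ℝ := v ⬝ᵥ (Hmat G δ *ᵥ v) with hQdef
  set t : ℝ := min 1 (g / (2 * Q)) with htdef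
  have ht0 : 0 < t := lt_min one_pos (div_pos hcon (by linarith))
  have ht1 : t ≤ 1 := min_le_left _ _
  have hrK : q + t • v ∈ K := by
    have := hKconv hq hp (by linarith : (0:ℝ) ≤ 1 - t) ht0.le (by ring)
    have heq : (1 - t) • q + t • p = q + t • v := by
      funext i
      simp only [Pi.add_apply, Pi.smul_apply, Pi.sub_apply, smul_eq_mul, hvdef]
      ring
    rwa [heq] at this
  have hle := hmax (q + t • v) hrK
  have hexp := profit_expand G δ hHT a c q (q + t • v)
  rw [add_sub_cancel_left] at hexp
  have hts : (t • v) ⬝ᵥ (Hmat G δ *ᵥ (a + c - (2:ℝ) • q)) = t * g := by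
    rw [smul_dotProduct]; rfl
  have hts2 : (t • v) ⬝ᵥ (Hmat G δ *ᵥ (t • v)) = t * (t * Q) := by
    rw [mulVec_smul, smul_dotProduct, dotProduct_smul]; rfl
  rw [hts, hts2] at hexp
  have hineq : t * g - t * (t * Q) ≤ 0 := by linarith [hexp ▸ hle]
  have hgle : g ≤ t * Q := by
    have := (mul_le_mul_iff_right₀ ht0).mp (by linarith : t * g ≤ t * (t * Q))
    linarith
  have htq : t * Q ≤ g / 2 := by
    have h1 : t ≤ g / (2 * Q) := min_le_right _ _
    have h2 : t * Q ≤ (g / (2 * Q)) * Q := mul_le_mul_of_nonneg_right h1 (by linarith)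
    have h3 : (g / (2 * Q)) * Q = g / 2 := by field_simp
    linarith
  linarith
end aux3

theorem stmt5 {n : ℕ} (hn : 1 ≤ n)
    (G : Matrix (Fin n) (Fin n) ℝ) (hGsym : G.IsSymm)
    (hGnn : ∀ i j, 0 ≤ G i j) (hGdiag : ∀ i, G i i = 0)
    (δ : ℝ) (hδ : 0 ≤ δ)
    (lam1 : ℝ) (hlam1 : lam1 ∈ spectrum ℝ G)
    (hlam1max : ∀ μ ∈ spectrum ℝ G, μ ≤ lam1)
    (hA1 : 0 < 1 - δ * lam1)
    (hpd : (Hmat G δ).PosDef)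
    (a c : Fin n → ℝ) (hac : ∀ i, c i < a i)
    (K : Set (Fin n → ℝ)) (hKne : K.Nonempty) (hKcl : IsClosed K) (hKconv : Convex ℝ K)
    (pstar : Fin n → ℝ) (hps : pstar ∈ K ∧ ∀ q ∈ K, profit G δ a c q ≤ profit G δ a c pstar)
    (η : ℝ) (hη : η ∈ Set.Ioo (0 : ℝ) (2 - 2 * δ * lam1)) :
    (∀ k, 0 < iotaVec G δ a c η k) ∧
    (pstar = pFam G δ a c η ↔
      (pFam G δ a c η ∈ K ∧
        ∀ p ∈ K, iotaVec G δ a c η ⬝ᵥ p ≤ iotaVec G δ a c η ⬝ᵥ pFam G δ a c η)) := by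
  obtain ⟨hη0, hη2⟩ := hη
  have hG : G.IsHermitian := real_isHermitian_of_isSymm hGsym
  have hl0 : 0 ≤ lam1 := lam1_nonneg hn G hG hGdiag lam1 hlam1max
  have h2η : 0 < 2 - η := by nlinarith [mul_nonneg hδ hl0]
  have hs2 : 0 ≤ 2 * δ / (2 - η) := div_nonneg (by linarith) h2η.le
  have hs2l : 2 * δ / (2 - η) * lam1 < 1 := by
    rw [div_mul_eq_mul_div, div_lt_one h2η]
    nlinarith
  have hMpd : (1 - (2 * δ / (2 - η)) • G).PosDef :=
    posDef_one_sub_smul G hG lam1 _ hlam1max hs2 hs2l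
  have hHT : (Hmat G δ)ᵀ = Hmat G δ := by
    have := hpd.isHermitian
    rwa [IsHermitian, conjTranspose_eq_transpose_of_trivial] at this
  -- positivity of iota
  have hacpos : ∀ i, 0 < (a - c) i := fun i => by
    simp only [Pi.sub_apply]; linarith [hac i]
  have hz : ∀ i, 0 < ((1 - (2 * δ / (2 - η)) • G)⁻¹ *ᵥ (a - c)) i :=
    inv_mulVec_pos G hGnn _ hs2 hMpd (a - c) hacpos
  have hA1pd : (1 - δ • G).PosDef :=
    posDef_one_sub_smul G hG lam1 δ hlam1max hδ (by linarith)
  have hiota : ∀ k, 0 < iotaVec G δ a c η k := by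
    intro k
    exact inv_mulVec_pos G hGnn δ hδ hA1pd _ hz k
  refine ⟨hiota, ?_⟩
  set P : Fin n → ℝ := pFam G δ a c η with hPdef
  set ι : Fin n → ℝ := iotaVec G δ a c η with hιdef
  have hr : 0 < η / (2 - η) := div_pos hη0 h2η
  -- gradient identity
  have hgrad : Hmat G δ *ᵥ (a + c - (2:ℝ) • P) = (η / (2 - η)) • ι := by
    have hkey : a + c - (2:ℝ) • P
        = (η / (2 - η)) • ((1 - (2 * δ / (2 - η)) • G)⁻¹ *ᵥ (a - c)) := by
      rw [hPdef]
      unfold pFam pUR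
      rw [mulVec_smul]
      funext i
      simp only [Pi.add_apply, Pi.sub_apply, Pi.smul_apply, smul_eq_mul]
      ring
    rw [hkey, mulVec_smul, hιdef]
    rfl
  -- relation between dot products
  have hrel : ∀ p : Fin n → ℝ,
      (p - P) ⬝ᵥ (Hmat G δ *ᵥ (a + c - (2:ℝ) • P))
        = (η / (2 - η)) * (ι ⬝ᵥ p - ι ⬝ᵥ P) := by
    intro p
    rw [hgrad, dotProduct_smul, sub_dotProduct, dotProduct_comm p ι, dotProduct_comm P ι]
    rfl
  constructor
  · intro heq
    have hPK : P ∈ K := heq ▸ hps.1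
    refine ⟨hPK, ?_⟩
    intro p hp
    have hfoc := foc G δ a c hpd hHT K hKconv pstar hps.1 hps.2 p hp
    rw [heq] at hfoc
    rw [hrel p] at hfoc
    nlinarith
  · rintro ⟨hmem, hhyp⟩
    have hmaxP : ∀ p ∈ K, profit G δ a c p ≤ profit G δ a c P := by
      intro p hp
      rw [profit_expand G δ hHT a c P p]
      have h1 : (p - P) ⬝ᵥ (Hmat G δ *ᵥ (a + c - (2:ℝ) • P)) ≤ 0 := by
        rw [hrel p]
        have := hhyp p hp
        nlinarith
      have h2 : 0 ≤ (p - P) ⬝ᵥ (Hmat G δ *ᵥ (p - P)) := by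
        rcases eq_or_ne (p - P) 0 with h | h
        · rw [h]; simp
        · have := hpd.dotProduct_mulVec_pos h
          simp only [star_trivial] at this
          linarith
      linarith
    have hPp : profit G δ a c pstar = profit G δ a c P :=
      le_antisymm (hmaxP pstar hps.1) (hps.2 P hmem)
    have hfoc := foc G δ a c hpd hHT K hKconv pstar hps.1 hps.2 P hmem
    have hexp := profit_expand G δ hHT a c pstar P
    have hvHv : (P - pstar) ⬝ᵥ (Hmat G δ *ᵥ (P - pstar)) ≤ 0 := by linarith
    have hveq : P - pstar = 0 := by
      by_contra hne
      have := hpd.dotProduct_mulVec_pos hne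
      simp only [star_trivial] at this
      linarith
    have : P = pstar := by
      have := sub_eq_zero.mp hveq
      exact this
    exact this.symm
end

section
/- Suppose K is invariant under uniform translations, i.e. p + t·𝟙 ∈ K for every p ∈ K and every t ∈ ℝ (as for regulations that only restrict price differences across markets), and suppose p^ur ∉ K. Then the regulated equilibrium price does not belong to the Pareto-optimal price family: p* ≠ 𝕡(η) for every η ∈ [0, 2 − 2δλ₁). Hence the regulated outcome is Pareto inefficient. -/
open Matrix
open scoped Pointwise

lemma quad_zero {b q : ℝ} (hq : 0 < q) (h : ∀ t : ℝ, t * b - t ^ 2 * q ≤ 0) : b = 0 := by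
  have h1 := h (b / (2 * q))
  have h2q : (0:ℝ) < 2 * q := by linarith
  have key : b ^ 2 / (4 * q) ≤ 0 := by
    have : b / (2 * q) * b - (b / (2 * q)) ^ 2 * q = b ^ 2 / (4 * q) := by
      field_simp; ring
    linarith [this ▸ h1]
  have h4q : (0:ℝ) < 4 * q := by linarith
  have hb2 : b ^ 2 ≤ 0 := by
    rcases div_nonpos_iff.mp key with ⟨_, h⟩ | ⟨h, _⟩
    · linarith
    · exact h
  have : b ^ 2 = 0 := le_antisymm hb2 (sq_nonneg b)
  exact sq_eq_zero_iff.mp this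

lemma dot_symm {n : ℕ} {H : Matrix (Fin n) (Fin n) ℝ} (hH : Hᵀ = H) (x y : Fin n → ℝ) :
    x ⬝ᵥ (H *ᵥ y) = y ⬝ᵥ (H *ᵥ x) := by
  rw [dotProduct_mulVec, ← mulVec_transpose, hH, dotProduct_comm]

lemma dot_self_pos {n : ℕ} {x : Fin n → ℝ} (hx : x ≠ 0) : 0 < x ⬝ᵥ x := by
  have h1 : x ⬝ᵥ x ≠ 0 := fun h => hx (dotProduct_self_eq_zero.mp h)
  have h2 : 0 ≤ x ⬝ᵥ x := Finset.sum_nonneg fun i _ => mul_self_nonneg _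
  exact lt_of_le_of_ne h2 (Ne.symm h1)

lemma rayleigh_le {n : ℕ} {A : Matrix (Fin n) (Fin n) ℝ} (hA : A.IsHermitian) (lam : ℝ)
    (hmax : ∀ μ ∈ spectrum ℝ A, μ ≤ lam) (x : Fin n → ℝ) :
    x ⬝ᵥ (A *ᵥ x) ≤ lam * (x ⬝ᵥ x) := by
  classical
  have hB : (lam • (1 : Matrix (Fin n) (Fin n) ℝ) - A).IsHermitian := by
    unfold Matrix.IsHermitian at hA ⊢
    rw [conjTranspose_sub, conjTranspose_smul, conjTranspose_one, hA, star_trivial]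
  have hev : ∀ i, 0 ≤ hB.eigenvalues i := by
    intro i
    have h1 := hB.eigenvalues_mem_spectrum_real i
    have h2 : spectrum ℝ (lam • (1 : Matrix (Fin n) (Fin n) ℝ) - A) = ({lam} : Set ℝ) - spectrum ℝ A := by
      rw [spectrum.singleton_sub_eq, Algebra.algebraMap_eq_smul_one]
    rw [h2, Set.mem_sub] at h1
    obtain ⟨r, hr, s, hs, hrs⟩ := h1
    rw [Set.mem_singleton_iff] at hr
    subst hr
    have hs' := hmax s hs
    rw [← hrs]
    linarith
  have hps := hB.posSemidef_iff_eigenvalues_nonneg.mpr hev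
  have h := hps.dotProduct_mulVec_nonneg x
  rw [star_trivial, sub_mulVec, smul_mulVec, one_mulVec, dotProduct_sub,
    dotProduct_smul, smul_eq_mul] at h
  linarith

lemma mulVec_sol_nonneg {n : ℕ} {M : Matrix (Fin n) (Fin n) ℝ} (hM : M.PosDef)
    (hoff : ∀ i j, i ≠ j → M i j ≤ 0) {u d : Fin n → ℝ} (hMu : M *ᵥ u = d)
    (hd : ∀ i, 0 ≤ d i) : ∀ i, 0 ≤ u i := by
  classical
  set v : Fin n → ℝ := fun j => max (-u j) 0 with hv
  have hv0 : ∀ j, 0 ≤ v j := fun j => le_max_right _ _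
  have hw0 : ∀ j, 0 ≤ u j + v j := by
    intro j
    rcases le_total (u j) 0 with h | h
    · have hvj : v j = -u j := max_eq_left (by linarith)
      rw [hvj]; linarith
    · linarith [hv0 j]
  have hvw : ∀ j, v j * (u j + v j) = 0 := by
    intro j
    rcases le_total (u j) 0 with h | h
    · have hvj : v j = -u j := max_eq_left (by linarith)
      rw [hvj]; ring
    · have hvj : v j = 0 := max_eq_right (by linarith)
      rw [hvj]; ring
  have h1 : v ⬝ᵥ (M *ᵥ (u + v)) ≤ 0 := by
    rw [dotProduct]
    apply Finset.sum_nonpos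
    intro i _
    simp only [mulVec, dotProduct, Pi.add_apply]
    rw [Finset.mul_sum]
    apply Finset.sum_nonpos
    intro j _
    by_cases hij : i = j
    · subst hij
      have heq : v i * (M i i * (u i + v i)) = M i i * (v i * (u i + v i)) := by ring
      rw [heq, hvw i, mul_zero]
    · have h1 := hoff i j hij
      have h2 := hv0 i
      have h3 := hw0 j
      have heq : v i * (M i j * (u j + v j)) = M i j * (v i * (u j + v j)) := by ring
      rw [heq]
      exact mul_nonpos_of_nonpos_of_nonneg h1 (mul_nonneg h2 h3)
  have h2 : 0 ≤ v ⬝ᵥ d := Finset.sum_nonneg fun j _ => mul_nonneg (hv0 j) (hd j)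
  have h3 : v ⬝ᵥ (M *ᵥ (u + v)) = v ⬝ᵥ d + v ⬝ᵥ (M *ᵥ v) := by
    rw [mulVec_add, dotProduct_add, hMu]
  have h4 : v ⬝ᵥ (M *ᵥ v) ≤ 0 := by linarith
  have hv00 : v = 0 := by
    by_contra h
    have := hM.dotProduct_mulVec_pos h
    rw [star_trivial] at this
    linarith
  intro i
  have hvi : v i = 0 := congrFun hv00 i
  have h5 : -u i ≤ v i := le_max_left _ _
  rw [hvi] at h5
  linarith

theorem stmt6 {n : ℕ} (hn : 1 ≤ n)
    (G : Matrix (Fin n) (Fin n) ℝ) (hGsym : G.IsSymm)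
    (hGnn : ∀ i j, 0 ≤ G i j) (hGdiag : ∀ i, G i i = 0)
    (δ : ℝ) (hδ : 0 ≤ δ)
    (lam1 : ℝ) (hlam1 : lam1 ∈ spectrum ℝ G)
    (hlam1max : ∀ μ ∈ spectrum ℝ G, μ ≤ lam1)
    (hA1 : 0 < 1 - δ * lam1)
    (hpd : (Hmat G δ).PosDef)
    (a c : Fin n → ℝ) (hac : ∀ i, c i < a i)
    (K : Set (Fin n → ℝ)) (hKne : K.Nonempty) (hKcl : IsClosed K) (hKconv : Convex ℝ K)
    (pstar : Fin n → ℝ) (hps : pstar ∈ K ∧ ∀ q ∈ K, profit G δ a c q ≤ profit G δ a c pstar)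
    (hKtrans : ∀ p ∈ K, ∀ t : ℝ, (p + t • (fun _ => (1 : ℝ))) ∈ K)
    (hpur : pUR a c ∉ K) :
    ∀ η ∈ Set.Ico (0 : ℝ) (2 - 2 * δ * lam1), pstar ≠ pFam G δ a c η := by
  classical
  have hGsymT : Gᵀ = G := hGsym
  have hGherm : G.IsHermitian := by
    have h : Gᴴ = Gᵀ := by ext i j; simp [conjTranspose_apply]
    exact h.trans hGsymT
  haveI : Nonempty (Fin n) := ⟨⟨0, hn⟩⟩
  set one : Fin n → ℝ := fun _ => (1 : ℝ) with honedef
  have hone0 : one ≠ 0 := by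
    intro h
    have := congrFun h ⟨0, hn⟩
    simp [honedef] at this
  -- symmetry of H
  have hA0symT : ((1 : Matrix (Fin n) (Fin n) ℝ) - δ • G)ᵀ = 1 - δ • G := by
    rw [transpose_sub, transpose_one, transpose_smul, hGsymT]
  have hHsym : (Hmat G δ)ᵀ = Hmat G δ := by
    simp only [Hmat]
    rw [transpose_nonsing_inv, hA0symT]
  -- lam1 ≥ 0
  have hlam1nn : 0 ≤ lam1 := by
    have hray := rayleigh_le hGherm lam1 hlam1max (Pi.single ⟨0, hn⟩ 1)
    have h1 : Pi.single (⟨0, hn⟩ : Fin n) (1:ℝ) ⬝ᵥ (G *ᵥ Pi.single ⟨0, hn⟩ 1) = 0 := by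
      simp [mulVec, single_dotProduct, dotProduct_single, hGdiag]
    have h2 : Pi.single (⟨0, hn⟩ : Fin n) (1:ℝ) ⬝ᵥ Pi.single ⟨0, hn⟩ 1 = 1 := by
      simp [single_dotProduct]
    rw [h1, h2, mul_one] at hray
    exact hray
  have hδlam : 0 ≤ δ * lam1 := mul_nonneg hδ hlam1nn
  -- FOC along the all-ones direction
  have hq : 0 < one ⬝ᵥ (Hmat G δ *ᵥ one) := by
    have h := hpd.dotProduct_mulVec_pos hone0
    rwa [star_trivial] at h
  have expand : ∀ t : ℝ, profit G δ a c (pstar + t • one) =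
      profit G δ a c pstar +
        (t * (one ⬝ᵥ (Hmat G δ *ᵥ ((a - pstar) - (pstar - c)))) -
          t ^ 2 * (one ⬝ᵥ (Hmat G δ *ᵥ one))) := by
    intro t
    have e1 : pstar + t • one - c = (pstar - c) + t • one := by abel
    have e2 : a - (pstar + t • one) = (a - pstar) - t • one := by abel
    simp only [profit, e1, e2, mulVec_sub, mulVec_smul, dotProduct_sub, add_dotProduct,
      dotProduct_smul, smul_dotProduct, smul_eq_mul]
    rw [dot_symm hHsym (pstar - c) one]
    simp only [mulVec_sub, dotProduct_sub]
    ring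
  have hineq : ∀ t : ℝ,
      t * (one ⬝ᵥ (Hmat G δ *ᵥ ((a - pstar) - (pstar - c)))) -
        t ^ 2 * (one ⬝ᵥ (Hmat G δ *ᵥ one)) ≤ 0 := by
    intro t
    have h := hps.2 _ (hKtrans pstar hps.1 t)
    rw [expand t] at h
    linarith
  have hB0 : one ⬝ᵥ (Hmat G δ *ᵥ ((a - pstar) - (pstar - c))) = 0 := quad_zero hq hineq
  -- the A0 = 1 - δ•G facts
  have hA0det : IsUnit ((1 : Matrix (Fin n) (Fin n) ℝ) - δ • G).det := by
    rcases eq_or_ne ((1 : Matrix (Fin n) (Fin n) ℝ) - δ • G).det 0 with h | h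
    · exfalso
      have hz : (Hmat G δ).det = 0 := by
        simp only [Hmat]
        rw [det_nonsing_inv, h, Ring.inverse_zero]
      exact hpd.det_pos.ne' hz
    · exact isUnit_iff_ne_zero.mpr h
  have hA0pd : ((1 : Matrix (Fin n) (Fin n) ℝ) - δ • G).PosDef := by
    have h := hpd.inv
    rwa [show (Hmat G δ)⁻¹ = (1 : Matrix (Fin n) (Fin n) ℝ) - δ • G by
      simp only [Hmat]; exact nonsing_inv_nonsing_inv _ hA0det] at h
  have hA0off : ∀ i j, i ≠ j → ((1 : Matrix (Fin n) (Fin n) ℝ) - δ • G) i j ≤ 0 := by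
    intro i j hij
    have h := mul_nonneg hδ (hGnn i j)
    simp only [Matrix.sub_apply, Matrix.smul_apply, Matrix.one_apply_ne hij, smul_eq_mul]
    linarith
  -- w := H *ᵥ one ≥ 1 entrywise
  have hA0w : ((1 : Matrix (Fin n) (Fin n) ℝ) - δ • G) *ᵥ (Hmat G δ *ᵥ one) = one := by
    simp only [Hmat]
    rw [mulVec_mulVec, mul_nonsing_inv _ hA0det, one_mulVec]
  have hwnn : ∀ i, 0 ≤ (Hmat G δ *ᵥ one) i :=
    mulVec_sol_nonneg hA0pd hA0off hA0w (fun i => by simp [honedef])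
  have hw1 : ∀ i, 1 ≤ (Hmat G δ *ᵥ one) i := by
    intro i
    have h := congrFun hA0w i
    have e : (((1 : Matrix (Fin n) (Fin n) ℝ) - δ • G) *ᵥ (Hmat G δ *ᵥ one)) i =
        (Hmat G δ *ᵥ one) i - δ * (G *ᵥ (Hmat G δ *ᵥ one)) i := by
      rw [sub_mulVec, one_mulVec, smul_mulVec]
      simp [Pi.sub_apply]
    have hGw : 0 ≤ (G *ᵥ (Hmat G δ *ᵥ one)) i := by
      simp only [mulVec, dotProduct]
      exact Finset.sum_nonneg fun j _ => mul_nonneg (hGnn i j) (hwnn j)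
    rw [e] at h
    have hone_i : one i = 1 := rfl
    rw [hone_i] at h
    nlinarith [mul_nonneg hδ hGw]
  -- main argument
  rintro η ⟨hη0, hηlt⟩ heq
  have h2η : 0 < 2 - η := by linarith
  rcases eq_or_lt_of_le hη0 with hη0' | hηpos
  · apply hpur
    have hfam : pFam G δ a c η = pUR a c := by
      rw [← hη0']
      simp [pFam]
    rw [← hfam, ← heq]
    exact hps.1
  · -- η > 0
    set ε := 2 * δ / (2 - η) with hεdef
    have hεnn : 0 ≤ ε := by positivity
    have hεlam : ε * lam1 < 1 := by
      rw [hεdef, div_mul_eq_mul_div, div_lt_one h2η]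
      linarith
    set M := (1 : Matrix (Fin n) (Fin n) ℝ) - ε • G with hMdef
    have hMherm : M.IsHermitian := by
      have h : Mᴴ = Mᵀ := by ext i j; simp [conjTranspose_apply]
      have h2 : Mᵀ = M := by rw [hMdef, transpose_sub, transpose_one, transpose_smul, hGsymT]
      exact h.trans h2
    have hMpd : M.PosDef := by
      refine PosDef.of_dotProduct_mulVec_pos hMherm fun x hx => ?_
      rw [star_trivial]
      have hxx := dot_self_pos hx
      have hray := rayleigh_le hGherm lam1 hlam1max x
      have e : x ⬝ᵥ (M *ᵥ x) = x ⬝ᵥ x - ε * (x ⬝ᵥ (G *ᵥ x)) := by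
        rw [hMdef, sub_mulVec, smul_mulVec, one_mulVec, dotProduct_sub,
          dotProduct_smul, smul_eq_mul]
      rw [e]
      nlinarith [mul_le_mul_of_nonneg_left hray hεnn, mul_pos (sub_pos.mpr hεlam) hxx]
    have hMdet : IsUnit M.det := isUnit_iff_ne_zero.mpr hMpd.det_pos.ne'
    have hMoff : ∀ i j, i ≠ j → M i j ≤ 0 := by
      intro i j hij
      have h := mul_nonneg hεnn (hGnn i j)
      simp only [hMdef, Matrix.sub_apply, Matrix.smul_apply, Matrix.one_apply_ne hij, smul_eq_mul]
      linarith
    have hMu : M *ᵥ (M⁻¹ *ᵥ (a - c)) = a - c := by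
      rw [mulVec_mulVec, mul_nonsing_inv _ hMdet, one_mulVec]
    have hdnn : ∀ i, 0 ≤ (a - c) i := fun i => by
      have := hac i
      simp only [Pi.sub_apply]
      linarith
    have hunn : ∀ i, 0 ≤ (M⁻¹ *ᵥ (a - c)) i := mulVec_sol_nonneg hMpd hMoff hMu hdnn
    have hud : ∀ i, a i - c i ≤ (M⁻¹ *ᵥ (a - c)) i := by
      intro i
      have h := congrFun hMu i
      have e : (M *ᵥ (M⁻¹ *ᵥ (a - c))) i =
          (M⁻¹ *ᵥ (a - c)) i - ε * (G *ᵥ (M⁻¹ *ᵥ (a - c))) i := by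
        rw [hMdef, sub_mulVec, one_mulVec, smul_mulVec]
        simp [Pi.sub_apply]
      have hGu : 0 ≤ (G *ᵥ (M⁻¹ *ᵥ (a - c))) i := by
        simp only [mulVec, dotProduct]
        exact Finset.sum_nonneg fun j _ => mul_nonneg (hGnn i j) (hunn j)
      rw [e] at h
      simp only [Pi.sub_apply] at h
      nlinarith [mul_nonneg hεnn hGu]
    -- rewrite the FOC using heq
    have hsub : (a - pstar) - (pstar - c) = (η / (2 - η)) • (M⁻¹ *ᵥ (a - c)) := by
      rw [heq]
      simp only [pFam, pUR]
      rw [← hεdef, ← hMdef, mulVec_smul]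
      module
    have hk : 0 < η / (2 - η) := div_pos hηpos h2η
    have hu0 : one ⬝ᵥ (Hmat G δ *ᵥ (M⁻¹ *ᵥ (a - c))) = 0 := by
      rw [hsub, mulVec_smul, dotProduct_smul, smul_eq_mul] at hB0
      rcases mul_eq_zero.mp hB0 with h | h
      · exact absurd h hk.ne'
      · exact h
    have hfin : 0 < one ⬝ᵥ (Hmat G δ *ᵥ (M⁻¹ *ᵥ (a - c))) := by
      rw [dot_symm hHsym]
      rw [dotProduct]
      apply Finset.sum_pos _ Finset.univ_nonempty
      intro i _
      have h1 := hud i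
      have h2 := hw1 i
      have h3 := hac i
      have h4 := hunn i
      nlinarith
    exact hfin.ne' hu0
end

section
/- Let p̲, p̄ ∈ ℝⁿ with p̲ ≤ p̄ entrywise, and let K := {p ∈ ℝⁿ : p̲ ≤ p ≤ p̄} be the regulation by price floors and ceilings. Then for every η ∈ (0, 2 − 2δλ₁), the regulated equilibrium price p* equals 𝕡(η) if and only if p̄ = 𝕡(η). -/
open Matrix

lemma dot_swap {n : ℕ} {H : Matrix (Fin n) (Fin n) ℝ} (hH : H.IsHermitian)
    (x y : Fin n → ℝ) : x ⬝ᵥ (H *ᵥ y) = y ⬝ᵥ (H *ᵥ x) := by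
  simp only [dotProduct, mulVec, Finset.mul_sum]
  rw [Finset.sum_comm]
  refine Finset.sum_congr rfl fun i _ => Finset.sum_congr rfl fun j _ => ?_
  have h := congrFun (congrFun hH i) j
  simp only [conjTranspose_apply, star_trivial] at h
  rw [← h]; ring

lemma quad_add {n : ℕ} {H : Matrix (Fin n) (Fin n) ℝ} (hH : H.IsHermitian)
    (u w : Fin n → ℝ) :
    (u + w) ⬝ᵥ (H *ᵥ (u + w)) =
      u ⬝ᵥ (H *ᵥ u) + 2 * (w ⬝ᵥ (H *ᵥ u)) + w ⬝ᵥ (H *ᵥ w) := by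
  have hs := dot_swap hH u w
  simp only [mulVec_add, dotProduct_add, add_dotProduct]
  linarith

lemma quad_sub {n : ℕ} {H : Matrix (Fin n) (Fin n) ℝ} (hH : H.IsHermitian)
    (u w : Fin n → ℝ) :
    (u - w) ⬝ᵥ (H *ᵥ (u - w)) =
      u ⬝ᵥ (H *ᵥ u) - 2 * (w ⬝ᵥ (H *ᵥ u)) + w ⬝ᵥ (H *ᵥ w) := by
  have hs := dot_swap hH u w
  simp only [mulVec_sub, dotProduct_sub, sub_dotProduct]
  linarith

lemma rayleigh0 {n : ℕ} {G : Matrix (Fin n) (Fin n) ℝ} (hG : G.IsHermitian) {lam1 : ℝ}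
    (hmax : ∀ μ ∈ spectrum ℝ G, μ ≤ lam1) (x : Fin n → ℝ) :
    x ⬝ᵥ (G *ᵥ x) ≤ lam1 * (x ⬝ᵥ x) := by
  classical
  set U : Matrix (Fin n) (Fin n) ℝ := (hG.eigenvectorUnitary : Matrix (Fin n) (Fin n) ℝ) with hU
  set w : Fin n → ℝ := Uᵀ *ᵥ x with hw
  have hsU : star U = Uᵀ := by
    rw [star_eq_conjTranspose, conjTranspose_eq_transpose_of_trivial]
  have hdot : ∀ y : Fin n → ℝ, x ⬝ᵥ (U *ᵥ y) = w ⬝ᵥ y := by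
    intro y
    rw [dotProduct_mulVec, ← mulVec_transpose]
  have hUUt : U * Uᵀ = 1 := by
    have h2 := (mem_unitaryGroup_iff).mp hG.eigenvectorUnitary.2
    rwa [hsU] at h2
  have hGx : G *ᵥ x = U *ᵥ (diagonal hG.eigenvalues *ᵥ w) := by
    conv_lhs => rw [hG.spectral_theorem, Unitary.conjStarAlgAut_apply]
    rw [← mulVec_mulVec, ← mulVec_mulVec, hsU, ← hw]
    simp [RCLike.ofReal_real_eq_id]
    rfl
  have hxx : x ⬝ᵥ x = w ⬝ᵥ w := by
    have hUw : U *ᵥ w = x := by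
      rw [hw, mulVec_mulVec, hUUt, one_mulVec]
    rw [← hdot w, hUw]
  have hlhs : x ⬝ᵥ (G *ᵥ x) = ∑ i, hG.eigenvalues i * (w i * w i) := by
    rw [hGx, hdot]
    simp only [dotProduct, mulVec_diagonal]
    exact Finset.sum_congr rfl fun i _ => by ring
  rw [hlhs, hxx]
  have hle : ∀ i ∈ Finset.univ, hG.eigenvalues i * (w i * w i) ≤ lam1 * (w i * w i) := by
    intro i _
    exact mul_le_mul_of_nonneg_right (hmax _ (hG.eigenvalues_mem_spectrum_real i))
      (mul_self_nonneg _)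
  calc ∑ i, hG.eigenvalues i * (w i * w i) ≤ ∑ i, lam1 * (w i * w i) :=
        Finset.sum_le_sum hle
    _ = lam1 * (w ⬝ᵥ w) := by rw [dotProduct, Finset.mul_sum]

lemma posdef_one_sub_smul {n : ℕ} {G : Matrix (Fin n) (Fin n) ℝ} (hG : G.IsHermitian)
    {lam1 : ℝ} (hmax : ∀ μ ∈ spectrum ℝ G, μ ≤ lam1) {s : ℝ} (hs : 0 ≤ s)
    (hsl : s * lam1 < 1) : (1 - s • G).PosDef := by
  refine posDef_iff_dotProduct_mulVec.mpr ⟨?_, ?_⟩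
  · show (1 - s • G)ᴴ = 1 - s • G
    rw [conjTranspose_sub, conjTranspose_smul, hG.eq, conjTranspose_one, star_trivial]
  · intro x hx
    have hxnn : 0 ≤ x ⬝ᵥ x := Finset.sum_nonneg fun i _ => mul_self_nonneg _
    have hxx : 0 < x ⬝ᵥ x := by
      rcases hxnn.lt_or_eq with h | h
      · exact h
      · exact absurd (dotProduct_self_eq_zero.mp h.symm) hx
    have hray := rayleigh0 hG hmax x
    have h1 : s * (x ⬝ᵥ (G *ᵥ x)) ≤ s * (lam1 * (x ⬝ᵥ x)) :=
      mul_le_mul_of_nonneg_left hray hs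
    have h2 : 0 < (1 - s * lam1) * (x ⬝ᵥ x) := mul_pos (by linarith) hxx
    have hexp : star x ⬝ᵥ ((1 - s • G) *ᵥ x) = x ⬝ᵥ x - s * (x ⬝ᵥ (G *ᵥ x)) := by
      rw [star_trivial, sub_mulVec, one_mulVec, smul_mulVec, dotProduct_sub,
        dotProduct_smul, smul_eq_mul]
    rw [hexp]
    nlinarith

lemma inv_mulVec_nonneg {n : ℕ} {G : Matrix (Fin n) (Fin n) ℝ}
    (hGnn : ∀ i j, 0 ≤ G i j) {s : ℝ} (hs : 0 ≤ s)
    (hpd : (1 - s • G).PosDef) {b : Fin n → ℝ} (hb : ∀ i, 0 ≤ b i) :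
    ∀ i, 0 ≤ ((1 - s • G)⁻¹ *ᵥ b) i := by
  classical
  set B : Matrix (Fin n) (Fin n) ℝ := 1 - s • G with hBdef
  set x : Fin n → ℝ := B⁻¹ *ᵥ b with hxdef
  have hBx : B *ᵥ x = b := by
    rw [hxdef, mulVec_mulVec, mul_nonsing_inv _ (isUnit_iff_isUnit_det _ |>.mp hpd.isUnit),
      one_mulVec]
  set y : Fin n → ℝ := fun i => max (-(x i)) 0 with hydef
  set z : Fin n → ℝ := fun i => max (x i) 0 with hzdef
  have hy0 : ∀ i, 0 ≤ y i := fun i => le_max_right _ _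
  have hz0 : ∀ i, 0 ≤ z i := fun i => le_max_right _ _
  have hxzy : x = z - y := by
    funext i
    simp only [hydef, hzdef, Pi.sub_apply]
    rcases le_total (x i) 0 with h | h
    · rw [max_eq_right h, max_eq_left (neg_nonneg.2 h)]; ring
    · rw [max_eq_left h, max_eq_right (neg_nonpos.2 h)]; ring
  have hyz0 : y ⬝ᵥ z = 0 := by
    apply Finset.sum_eq_zero
    intro i _
    rcases le_total (x i) 0 with h | h
    · simp [hydef, hzdef, max_eq_right h]
    · simp [hydef, hzdef, max_eq_right (neg_nonpos.2 h)]
  have hq1 : 0 ≤ y ⬝ᵥ b := Finset.sum_nonneg fun i _ => mul_nonneg (hy0 i) (hb i)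
  have hGz : 0 ≤ y ⬝ᵥ (G *ᵥ z) := by
    refine Finset.sum_nonneg fun i _ => mul_nonneg (hy0 i) ?_
    simp only [mulVec, dotProduct]
    exact Finset.sum_nonneg fun j _ => mul_nonneg (hGnn i j) (hz0 j)
  have hq2 : y ⬝ᵥ (B *ᵥ z) ≤ 0 := by
    rw [hBdef, sub_mulVec, one_mulVec, smul_mulVec, dotProduct_sub, dotProduct_smul,
      smul_eq_mul, hyz0]
    have := mul_nonneg hs hGz
    linarith
  have hq3 : y ⬝ᵥ (B *ᵥ y) ≤ 0 := by
    have hsplit : y ⬝ᵥ b = y ⬝ᵥ (B *ᵥ z) - y ⬝ᵥ (B *ᵥ y) := by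
      rw [← hBx, hxzy, mulVec_sub, dotProduct_sub]
    linarith
  have hy : y = 0 := by
    by_contra hy
    have := hpd.dotProduct_mulVec_pos hy
    rw [star_trivial] at this
    linarith
  intro i
  rw [hxzy, hy]
  simpa using hz0 i

lemma profit_eq' {n : ℕ} (G : Matrix (Fin n) (Fin n) ℝ) (δ : ℝ)
    (hH : (Hmat G δ).IsHermitian) (a c p : Fin n → ℝ) :
    profit G δ a c p =
      ((1/2:ℝ) • (a - c)) ⬝ᵥ (Hmat G δ *ᵥ ((1/2:ℝ) • (a - c)))
        - (pUR a c - p) ⬝ᵥ (Hmat G δ *ᵥ (pUR a c - p)) := by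
  have h1 : p - c = (1/2:ℝ) • (a - c) - (pUR a c - p) := by
    funext i
    simp only [Pi.sub_apply, Pi.smul_apply, pUR, Pi.add_apply, smul_eq_mul]
    ring
  have h2 : a - p = (1/2:ℝ) • (a - c) + (pUR a c - p) := by
    funext i
    simp only [Pi.sub_apply, Pi.smul_apply, pUR, Pi.add_apply, smul_eq_mul]
    ring
  rw [profit, h1, h2]
  set u : Fin n → ℝ := pUR a c - p with hu
  set w : Fin n → ℝ := (1/2:ℝ) • (a - c) with hwd
  have hs := dot_swap hH u w
  simp only [mulVec_add, dotProduct_add, sub_dotProduct]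
  linarith

theorem stmt7 {n : ℕ} (hn : 1 ≤ n)
    (G : Matrix (Fin n) (Fin n) ℝ) (hGsym : G.IsSymm)
    (hGnn : ∀ i j, 0 ≤ G i j) (hGdiag : ∀ i, G i i = 0)
    (δ : ℝ) (hδ : 0 ≤ δ)
    (lam1 : ℝ) (hlam1 : lam1 ∈ spectrum ℝ G)
    (hlam1max : ∀ μ ∈ spectrum ℝ G, μ ≤ lam1)
    (hA1 : 0 < 1 - δ * lam1)
    (hpd : (Hmat G δ).PosDef)
    (a c : Fin n → ℝ) (hac : ∀ i, c i < a i)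
    (plow phigh : Fin n → ℝ) (hbounds : ∀ i, plow i ≤ phigh i)
    (pstar : Fin n → ℝ)
    (hps : pstar ∈ {p : Fin n → ℝ | ∀ i, plow i ≤ p i ∧ p i ≤ phigh i} ∧
      ∀ q ∈ {p : Fin n → ℝ | ∀ i, plow i ≤ p i ∧ p i ≤ phigh i},
        profit G δ a c q ≤ profit G δ a c pstar) :
    ∀ η ∈ Set.Ioo (0 : ℝ) (2 - 2 * δ * lam1),
      (pstar = pFam G δ a c η ↔ phigh = pFam G δ a c η) := by
  classical
  intro η hη
  obtain ⟨hη0, hη2⟩ := hη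
  obtain ⟨hmem, hmax⟩ := hps
  have hG : G.IsHermitian := by
    rw [IsHermitian, conjTranspose_eq_transpose_of_trivial]; exact hGsym
  -- lam1 is nonnegative
  have hlam0 : 0 ≤ lam1 := by
    have i0 : Fin n := ⟨0, hn⟩
    have h := rayleigh0 hG hlam1max (Pi.single i0 1)
    simp [mulVec_single, single_dotProduct, dotProduct_single, hGdiag i0] at h
    linarith
  have hdlam : 0 ≤ δ * lam1 := mul_nonneg hδ hlam0
  have h2η : 0 < 2 - η := by linarith
  set s : ℝ := 2 * δ / (2 - η) with hsdef
  have hs0 : 0 ≤ s := div_nonneg (by linarith) h2η.le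
  have hsl : s * lam1 < 1 := by
    rw [hsdef, div_mul_eq_mul_div, div_lt_one h2η]
    linarith
  have hBη : (1 - s • G).PosDef := posdef_one_sub_smul hG hlam1max hs0 hsl
  set v : Fin n → ℝ := (1/2:ℝ) • (a - c) with hvdef
  have hv : ∀ i, 0 < v i := by
    intro i
    simp only [hvdef, Pi.smul_apply, Pi.sub_apply, smul_eq_mul]
    linarith [hac i]
  set u0 : Fin n → ℝ := (1 - s • G)⁻¹ *ᵥ v with hu0def
  have hu0nn : ∀ i, 0 ≤ u0 i := inv_mulVec_nonneg hGnn hs0 hBη (fun i => (hv i).le)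
  have hBu0 : (1 - s • G) *ᵥ u0 = v := by
    rw [hu0def, mulVec_mulVec, mul_nonsing_inv _ (isUnit_iff_isUnit_det _ |>.mp hBη.isUnit),
      one_mulVec]
  have hu0pos : ∀ i, 0 < u0 i := by
    intro i
    have h1 := congrFun hBu0 i
    rw [sub_mulVec, one_mulVec, smul_mulVec] at h1
    simp only [Pi.sub_apply, Pi.smul_apply, smul_eq_mul] at h1
    have h2 : 0 ≤ (G *ᵥ u0) i := by
      simp only [mulVec, dotProduct]
      exact Finset.sum_nonneg fun j _ => mul_nonneg (hGnn i j) (hu0nn j)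
    have h3 := hv i
    nlinarith [mul_nonneg hs0 h2]
  set uh : Fin n → ℝ := pUR a c - pFam G δ a c η with huhdef
  have hgap : uh = (η / (2 - η)) • u0 := by
    rw [huhdef, hu0def, hvdef, hsdef]
    simp only [pFam, sub_sub_cancel]
  have huh : ∀ i, 0 < uh i := by
    intro i
    rw [hgap]
    simp only [Pi.smul_apply, smul_eq_mul]
    exact mul_pos (div_pos hη0 h2η) (hu0pos i)
  -- facts about H
  have hδl : δ * lam1 < 1 := by linarith
  have hBpd : (1 - δ • G).PosDef := posdef_one_sub_smul hG hlam1max hδ hδl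
  have hH : (Hmat G δ).IsHermitian := hpd.1
  have hHnn : ∀ i j, 0 ≤ Hmat G δ i j := by
    intro i j
    have hb : ∀ k, (0:ℝ) ≤ (Pi.single j 1 : Fin n → ℝ) k := by
      intro k
      rcases eq_or_ne k j with h | h
      · subst h; simp
      · simp [Pi.single_eq_of_ne h]
    have h := inv_mulVec_nonneg hGnn hδ hBpd hb i
    rw [mulVec_single] at h
    simpa [Hmat] using h
  have hHd : ∀ i, 0 < Hmat G δ i i := by
    intro i
    have h := hpd.dotProduct_mulVec_pos (x := (Pi.single i 1 : Fin n → ℝ))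
      (fun hcon => (one_ne_zero : (1:ℝ) ≠ 0) (by simpa using congrFun hcon i))
    rw [star_trivial] at h
    simpa [mulVec_single, single_dotProduct] using h
  have hPE : ∀ p, profit G δ a c p =
      v ⬝ᵥ (Hmat G δ *ᵥ v) - (pUR a c - p) ⬝ᵥ (Hmat G δ *ᵥ (pUR a c - p)) := by
    intro p
    rw [hvdef]
    exact profit_eq' G δ hH a c p
  constructor
  · -- pstar = pFam → phigh = pFam
    intro hp
    have hupst : pUR a c - pstar = uh := by rw [hp, huhdef]
    have key : ∀ i, phigh i = pstar i := by
      intro i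
      by_contra hne
      have hlt : pstar i < phigh i := lt_of_le_of_ne (hmem i).2 (fun h => hne h.symm)
      set g : ℝ := (Hmat G δ *ᵥ uh) i with hgdef
      have hg : 0 < g := by
        rw [hgdef]
        have hexpand : (Hmat G δ *ᵥ uh) i = ∑ j, Hmat G δ i j * uh j := rfl
        rw [hexpand]
        have hterm : ∀ j ∈ Finset.univ, (0:ℝ) ≤ Hmat G δ i j * uh j :=
          fun j _ => mul_nonneg (hHnn i j) (huh j).le
        have hone := Finset.single_le_sum hterm (Finset.mem_univ i)
        have hpos := mul_pos (hHd i) (huh i)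
        linarith
      set t : ℝ := min (phigh i - pstar i) (g / Hmat G δ i i) with htdef
      have ht0 : 0 < t := lt_min (by linarith) (div_pos hg (hHd i))
      have htle1 : t ≤ phigh i - pstar i := min_le_left _ _
      have htle2 : t * Hmat G δ i i ≤ g := by
        have h1 : t ≤ g / Hmat G δ i i := min_le_right _ _
        calc t * Hmat G δ i i ≤ (g / Hmat G δ i i) * Hmat G δ i i :=
              mul_le_mul_of_nonneg_right h1 (hHd i).le
          _ = g := div_mul_cancel₀ _ (hHd i).ne'
      set q : Fin n → ℝ := pstar + t • (Pi.single i 1 : Fin n → ℝ) with hqdef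
      have hqmem : q ∈ {p : Fin n → ℝ | ∀ k, plow k ≤ p k ∧ p k ≤ phigh k} := by
        intro k
        have hqk : q k = pstar k + t * (Pi.single i 1 : Fin n → ℝ) k := by
          rw [hqdef]; simp
        rcases eq_or_ne k i with h | h
        · subst h
          rw [hqk]
          simp only [Pi.single_eq_same, mul_one]
          exact ⟨by linarith [(hmem k).1], by linarith⟩
        · rw [hqk, Pi.single_eq_of_ne h]
          simpa using hmem k
      have hq_gt : profit G δ a c pstar < profit G δ a c q := by
        have hqgap : pUR a c - q = uh - t • (Pi.single i 1 : Fin n → ℝ) := by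
          rw [hqdef, ← hupst]; abel
        rw [hPE pstar, hPE q, hupst, hqgap, quad_sub hH uh (t • (Pi.single i 1 : Fin n → ℝ))]
        have hd1 : (t • (Pi.single i 1 : Fin n → ℝ)) ⬝ᵥ (Hmat G δ *ᵥ uh) = t * g := by
          rw [smul_dotProduct, single_dotProduct]
          simp [hgdef]
        have hd2 : (t • (Pi.single i 1 : Fin n → ℝ)) ⬝ᵥ (Hmat G δ *ᵥ (t • (Pi.single i 1 : Fin n → ℝ)))
            = t * (t * Hmat G δ i i) := by
          rw [mulVec_smul, dotProduct_smul, smul_dotProduct, single_dotProduct, mulVec_single]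
          simp
        rw [hd1, hd2]
        nlinarith [mul_pos ht0 hg, mul_le_mul_of_nonneg_left htle2 ht0.le]
      exact absurd (hmax q hqmem) (not_le.2 hq_gt)
    have hphps : phigh = pstar := funext key
    rw [hphps]; exact hp
  · -- phigh = pFam → pstar = pFam
    intro hph
    have huph : pUR a c - phigh = uh := by rw [hph, huhdef]
    have hStep : ∀ q ∈ {p : Fin n → ℝ | ∀ k, plow k ≤ p k ∧ p k ≤ phigh k},
        profit G δ a c q ≤ profit G δ a c phigh := by
      intro q hq
      have hdq : pUR a c - q = uh + (phigh - q) := by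
        rw [← huph]; abel
      rw [hPE q, hPE phigh, huph, hdq, quad_add hH uh (phigh - q)]
      have h1 : 0 ≤ (phigh - q) ⬝ᵥ (Hmat G δ *ᵥ uh) := by
        refine Finset.sum_nonneg fun j _ => mul_nonneg ?_ ?_
        · simp only [Pi.sub_apply]
          linarith [(hq j).2]
        · simp only [mulVec, dotProduct]
          exact Finset.sum_nonneg fun k _ => mul_nonneg (hHnn j k) (huh k).le
      have h2 : 0 ≤ (phigh - q) ⬝ᵥ (Hmat G δ *ᵥ (phigh - q)) := by
        have h3 := hpd.posSemidef.dotProduct_mulVec_nonneg (phigh - q)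
        rwa [star_trivial] at h3
      linarith
    have hphmem : phigh ∈ {p : Fin n → ℝ | ∀ k, plow k ≤ p k ∧ p k ≤ phigh k} :=
      fun k => ⟨hbounds k, le_refl _⟩
    have heq : profit G δ a c pstar = profit G δ a c phigh :=
      le_antisymm (hStep pstar hmem) (hmax phigh hphmem)
    have hQeq : (pUR a c - pstar) ⬝ᵥ (Hmat G δ *ᵥ (pUR a c - pstar))
        = uh ⬝ᵥ (Hmat G δ *ᵥ uh) := by
      have e1 := hPE pstar
      have e2 := hPE phigh
      rw [huph] at e2
      linarith
    have hdp : pUR a c - pstar = uh + (phigh - pstar) := by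
      rw [← huph]; abel
    rw [hdp, quad_add hH uh (phigh - pstar)] at hQeq
    have h1 : 0 ≤ (phigh - pstar) ⬝ᵥ (Hmat G δ *ᵥ uh) := by
      refine Finset.sum_nonneg fun j _ => mul_nonneg ?_ ?_
      · simp only [Pi.sub_apply]
        linarith [(hmem j).2]
      · simp only [mulVec, dotProduct]
        exact Finset.sum_nonneg fun k _ => mul_nonneg (hHnn j k) (huh k).le
    have hd0 : phigh - pstar = 0 := by
      by_contra hne
      have h2 := hpd.dotProduct_mulVec_pos hne
      rw [star_trivial] at h2
      linarith
    have hpsph : pstar = phigh := (sub_eq_zero.mp hd0).symm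
    rw [hpsph]; exact hph
end
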